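/- MLE as Min-Max-IRL over log-policy rewards (Theorem 1, part 2): Let π = (π_t)_{t=1}^T be a Markov policy such that each kernel π_t(·|s) has a ν-density π_t(a|s) with log π_t bounded and jointly measurable, and define the reward r := (β log π_t)_{t=1}^T. Then: (i) the soft-optimal policy for r equals π, i.e. π*_r = π; (ii) V*_{t,r} ≡ 0 for all t = 1,…,T, and in particular J*(r) = 0; and (iii) for every trajectory τ = (s₁,a₁,…,s_T,a_T), −Σ_{t=1}^T log π_t(a_t|s_t) = β^{−1} ( J*(r) − Σ_{t=1}^T r_t(s_t,a_t) ). Hence MLE over a policy class Π with such densities is equivalent to Min-Max-IRL over the reward class β log Π := { (β log π_t)_{t=1}^T : π ∈ Π } at both the population and the empirical level. -/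

import Mathlib

open MeasureTheory ProbabilityTheory Real
open scoped ENNReal RealInnerProductSpace

noncomputable section

namespace IRL

variable {S A : Type*} [MeasurableSpace S] [MeasurableSpace A]

/-- A reward tuple `(r_t)` of bounded measurable functions. -/
def IsBddReward (r : ℕ → S → A → ℝ) : Prop :=
  ∀ t, Measurable (fun q : S × A => r t q.1 q.2) ∧ ∃ C, ∀ s a, |r t s a| ≤ C

/-- `p` is a family of `ν`-probability densities of a Markov policy. -/
def IsPolicyDensity (ν : Measure A) (p : ℕ → S → A → ℝ) : Prop :=
  (∀ t, Measurable (fun q : S × A => p t q.1 q.2)) ∧ (∀ t s a, 0 ≤ p t s a) ∧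
    (∀ t s, ∫ a, p t s a ∂ν = 1)

/-- the log-densities `log π_t` are bounded (in particular the densities are positive). -/
def HasBddLogDensity (p : ℕ → S → A → ℝ) : Prop :=
  ∀ t, (∀ s a, 0 < p t s a) ∧ ∃ C, ∀ s a, |Real.log (p t s a)| ≤ C

variable (T : ℕ) (P : ℕ → Kernel (S × A) S) (ν : Measure A)

/-- Soft-optimal value function `V*_{t,r}` (backward recursion, `V* t ≡ 0` for `t > T`). -/
def Vstar (β : ℝ) (r : ℕ → S → A → ℝ) (t : ℕ) (s : S) : ℝ :=
  if T < t then 0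
  else β * Real.log (∫ a, Real.exp ((r t s a + ∫ s', Vstar β r (t + 1) s' ∂(P t (s, a))) / β) ∂ν)
termination_by T + 1 - t
decreasing_by omega

/-- Soft-optimal state-action value `Q*_{t,r}`. -/
def Qstar (β : ℝ) (r : ℕ → S → A → ℝ) (t : ℕ) (s : S) (a : A) : ℝ :=
  r t s a + ∫ s', Vstar T P ν β r (t + 1) s' ∂(P t (s, a))

/-- `ν`-density of the soft-optimal policy `π*_r`. -/
def piStar (β : ℝ) (r : ℕ → S → A → ℝ) (t : ℕ) (s : S) (a : A) : ℝ :=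
  Real.exp ((Qstar T P ν β r t s a - Vstar T P ν β r t s) / β)

/-- Value function `V^π_{t,r}` of a policy given by densities `p` (with `β = 0` this is the
unregularized value function `V^{π,0}`). -/
def Vpol (β : ℝ) (p r : ℕ → S → A → ℝ) (t : ℕ) (s : S) : ℝ :=
  if T < t then 0
  else ∫ a,
    (r t s a + (∫ s', Vpol β p r (t + 1) s' ∂(P t (s, a))) - β * Real.log (p t s a)) * p t s a ∂ν
termination_by T + 1 - t
decreasing_by omega

/-- `Q^π_{t,r}` for a policy given by densities `p`. -/
def Qpol (β : ℝ) (p r : ℕ → S → A → ℝ) (t : ℕ) (s : S) (a : A) : ℝ :=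
  r t s a + ∫ s', Vpol T P ν β p r (t + 1) s' ∂(P t (s, a))

/-- Regularized advantage `A^π_{t,r}(s,a) = Q^π - V^π - β log π_t(a|s)`. -/
def Apol (β : ℝ) (p r : ℕ → S → A → ℝ) (t : ℕ) (s : S) (a : A) : ℝ :=
  Qpol T P ν β p r t s a - Vpol T P ν β p r t s - β * Real.log (p t s a)

variable (P0 : Measure S)

/-- Optimal value `J*(r) = ∫ V*_{1,r} dP₀`. -/
def Jstar (β : ℝ) (r : ℕ → S → A → ℝ) : ℝ := ∫ s, Vstar T P ν β r 1 s ∂P0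

/-- Expected (regularized) return `J(r,π)` of a density policy. -/
def Jpol (β : ℝ) (p r : ℕ → S → A → ℝ) : ℝ := ∫ s, Vpol T P ν β p r 1 s ∂P0

/-- Iterated expectation, from time `t` in state `s`, of a trajectory functional `g` under a
(kernel) Markov policy `π`; coordinates of the trajectory outside `{1,…,T}` are irrelevant
junk values. -/
def polExp [Nonempty S] [Nonempty A] (pol : ℕ → Kernel S A) (g : (ℕ → S × A) → ℝ) (t : ℕ)
    (s : S) : ℝ :=
  if T < t then g (fun _ => (Classical.arbitrary S, Classical.arbitrary A))
  else ∫ a, ∫ s', polExp pol (fun τ => g (Function.update τ t (s, a))) (t + 1) s' ∂(P t (s, a))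
    ∂(pol t s)
termination_by T + 1 - t
decreasing_by omega

/-- `μ` is the trajectory law `P^π` of the Markov policy `π` (with initial distribution `P₀`),
characterized through integrals of all bounded measurable trajectory functionals. -/
def IsTrajLaw [Nonempty S] [Nonempty A] (pol : ℕ → Kernel S A) (μ : Measure (ℕ → S × A)) : Prop :=
  IsProbabilityMeasure μ ∧
    ∀ g : (ℕ → S × A) → ℝ, Measurable g → (∃ C, ∀ τ, |g τ| ≤ C) →
      ∫ τ, g τ ∂μ = ∫ s, polExp T P pol g 1 s ∂P0

/-- The kernel `s ↦ p t s ⬝ ν` of a policy given by densities. -/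
def densKernel [IsFiniteMeasure ν] (p : ℕ → S → A → ℝ) (t : ℕ) : Kernel S A :=
  Kernel.withDensity (Kernel.const S ν) fun s a => ENNReal.ofReal (p t s a)

open Classical in
/-- Kullback–Leibler divergence `∫ log (dμ/dμ') dμ` if `μ ≪ μ'` (`∞` otherwise). -/
def KL {X : Type*} [MeasurableSpace X] (μ μ' : Measure X) : ℝ≥0∞ :=
  if μ ≪ μ' ∧ Integrable (fun x => Real.log (μ.rnDeriv μ' x).toReal) μ then
    ENNReal.ofReal (∫ x, Real.log (μ.rnDeriv μ' x).toReal ∂μ)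
  else ⊤

/-- Squared Hellinger distance, computed with the dominating measure `μ + μ'`. -/
def sqHellinger {X : Type*} [MeasurableSpace X] (μ μ' : Measure X) : ℝ :=
  ∫ x, (Real.sqrt ((μ.rnDeriv (μ + μ') x).toReal)
      - Real.sqrt ((μ'.rnDeriv (μ + μ') x).toReal)) ^ 2 ∂(μ + μ')

/-- Second directional derivative. -/
def D2 {E : Type*} [NormedAddCommGroup E] [NormedSpace ℝ E] (F : E → ℝ) (θ ξ ζ : E) : ℝ :=
  fderiv ℝ (fun x => fderiv ℝ F x ζ) θ ξ

/-- Third directional derivative. -/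
def D3 {E : Type*} [NormedAddCommGroup E] [NormedSpace ℝ E] (F : E → ℝ) (θ ξ ζ ω : E) : ℝ :=
  fderiv ℝ (fun x => D2 F x ζ ω) θ ξ

lemma vstar_log_zero {S A : Type*} [MeasurableSpace S] [MeasurableSpace A]
    (T : ℕ) (P : ℕ → Kernel (S × A) S) (ν : Measure A) (β : ℝ) (hβ : 0 < β)
    (p : ℕ → S → A → ℝ) (hpos : ∀ t s a, 0 < p t s a)
    (hnorm : ∀ t s, ∫ a, p t s a ∂ν = 1) :
    ∀ t (s : S), IRL.Vstar T P ν β (fun t s a => β * Real.log (p t s a)) t s = 0 := by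
  intro t s
  rw [IRL.Vstar]
  split
  · rfl
  · have ih : ∀ s' : S,
        IRL.Vstar T P ν β (fun t s a => β * Real.log (p t s a)) (t + 1) s' = 0 :=
      fun s' => vstar_log_zero T P ν β hβ p hpos hnorm (t + 1) s'
    simp only [ih, MeasureTheory.integral_zero, add_zero]
    have hkey : (∫ a, Real.exp (β * Real.log (p t s a) / β) ∂ν) = ∫ a, p t s a ∂ν := by
      congr 1
      funext a
      rw [mul_div_cancel_left₀ _ hβ.ne', Real.exp_log (hpos t s a)]
    rw [hkey, hnorm, Real.log_one, mul_zero]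
termination_by t => T + 1 - t
decreasing_by omega

end IRL

open MeasureTheory ProbabilityTheory Real
open scoped ENNReal

/-- **MLE as Min-Max-IRL over log-policy rewards** (Theorem 1, part 2). For a Markov policy
`π` with bounded log-`ν`-densities and the reward `r := β log π`: (i) `π*_r = π`;
(ii) `V*_{t,r} ≡ 0` and `J*(r) = 0`; (iii) the MLE and Min-Max-IRL trajectory losses coincide
pointwise, hence the two problems are equivalent at both the population and the empirical
level. -/
theorem mle_as_minmax_irl_over_log_policy_rewards
    {S A : Type*} [MeasurableSpace S] [MeasurableSpace A] [Nonempty S] [Nonempty A]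
    (T : ℕ) (hT : 1 ≤ T)
    (P0 : Measure S) [IsProbabilityMeasure P0]
    (P : ℕ → Kernel (S × A) S) [∀ t, IsMarkovKernel (P t)]
    (ν : Measure A) [IsFiniteMeasure ν] (hν : ν Set.univ ≠ 0)
    (β : ℝ) (hβ : 0 < β)
    (p : ℕ → S → A → ℝ) (hp : IRL.IsPolicyDensity ν p) (hlog : IRL.HasBddLogDensity p)
    (r : ℕ → S → A → ℝ) (hr : r = fun t s a => β * Real.log (p t s a)) :
    -- (i) the soft-optimal policy for `r` is `π` itself
    (∀ t, 1 ≤ t → t ≤ T → ∀ s a, IRL.piStar T P ν β r t s a = p t s a) ∧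
    -- (ii) `V*_{t,r} ≡ 0` and `J*(r) = 0`
    (∀ t, 1 ≤ t → t ≤ T → ∀ s, IRL.Vstar T P ν β r t s = 0) ∧
    IRL.Jstar T P ν P0 β r = 0 ∧
    -- (iii) pointwise identity of the MLE and Min-Max-IRL trajectory losses
    (∀ τ : ℕ → S × A,
      -∑ t ∈ Finset.Icc 1 T, Real.log (p t (τ t).1 (τ t).2)
        = β⁻¹ * (IRL.Jstar T P ν P0 β r - ∑ t ∈ Finset.Icc 1 T, r t (τ t).1 (τ t).2)) ∧
    -- equivalence at the empirical level, for any finite dataset of trajectories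
    (∀ n : ℕ, 1 ≤ n → ∀ D : Fin n → (ℕ → S × A),
      (n : ℝ)⁻¹ * ∑ i : Fin n,
          (- ∑ t ∈ Finset.Icc 1 T, Real.log (p t (D i t).1 (D i t).2))
        = β⁻¹ * (IRL.Jstar T P ν P0 β r
            - (n : ℝ)⁻¹ * ∑ i : Fin n, ∑ t ∈ Finset.Icc 1 T, r t (D i t).1 (D i t).2)) ∧
    -- equivalence at the population level, for any expert policy
    (∀ piE : ℕ → Kernel S A, (∀ t, IsMarkovKernel (piE t)) →
      ∀ PE : Measure (ℕ → S × A), IRL.IsTrajLaw T P P0 piE PE →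
      ∫ τ, (-∑ t ∈ Finset.Icc 1 T, Real.log (p t (τ t).1 (τ t).2)) ∂PE
        = β⁻¹ * (IRL.Jstar T P ν P0 β r
            - ∫ τ, (∑ t ∈ Finset.Icc 1 T, r t (τ t).1 (τ t).2) ∂PE)) := by
  have hpos : ∀ t s a, 0 < p t s a := fun t => (hlog t).1
  have hnorm : ∀ t s, ∫ a, p t s a ∂ν = 1 := hp.2.2
  have hV : ∀ t (s : S), IRL.Vstar T P ν β r t s = 0 := by
    subst hr; exact IRL.vstar_log_zero T P ν β hβ p hpos hnorm
  have hJ : IRL.Jstar T P ν P0 β r = 0 := by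
    unfold IRL.Jstar
    simp only [hV, MeasureTheory.integral_zero]
  refine ⟨?_, fun t _ _ s => hV t s, hJ, ?_, ?_, ?_⟩
  · intro t _ _ s a
    unfold IRL.piStar IRL.Qstar
    simp only [hV, MeasureTheory.integral_zero, add_zero, sub_zero]
    rw [hr]
    simp only
    rw [mul_div_cancel_left₀ _ hβ.ne', Real.exp_log (hpos t s a)]
  · intro τ
    rw [hJ, hr]
    simp only
    rw [← Finset.mul_sum]
    field_simp
    ring
  · intro n _ D
    rw [hJ, hr]
    simp only
    have h1 : ∀ i : Fin n, ∑ t ∈ Finset.Icc 1 T, β * Real.log (p t (D i t).1 (D i t).2)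
        = β * ∑ t ∈ Finset.Icc 1 T, Real.log (p t (D i t).1 (D i t).2) := fun i =>
      (Finset.mul_sum _ _ _).symm
    simp only [h1, ← Finset.mul_sum]
    field_simp
    rw [Finset.sum_neg_distrib]
    ring
  · intro piE _ PE _
    rw [hJ, hr]
    simp only
    have h1 : ∀ τ : ℕ → S × A, ∑ t ∈ Finset.Icc 1 T, β * Real.log (p t (τ t).1 (τ t).2)
        = β * ∑ t ∈ Finset.Icc 1 T, Real.log (p t (τ t).1 (τ t).2) := fun τ =>
      (Finset.mul_sum _ _ _).symm
    simp only [h1, MeasureTheory.integral_const_mul, MeasureTheory.integral_neg]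
    field_simp
    ring
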